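/- For every real n > 1, ∫₀^∞ (ln x)/(xⁿ + 1) dx = (1/(4n²)) [ ψ¹(1/2 − 1/(2n)) + ψ¹(1/2 + 1/(2n)) − ψ¹(1 − 1/(2n)) − ψ¹(1/(2n)) ], where ψ¹ is the trigamma function. -/

import Mathlib

open Real MeasureTheory Set

noncomputable def trigamma (z : ℝ) : ℝ := ∑' k : ℕ, 1 / (z + k)^2

section Aux

lemma img1 : (fun t : ℝ => Real.exp (-t)) '' (Set.Ioi 0) = Set.Ioo 0 1 := by
  ext y
  constructor
  · rintro ⟨t, ht, rfl⟩
    exact ⟨Real.exp_pos _, by rw [Real.exp_lt_one_iff]; simpa using ht⟩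
  · rintro ⟨h0, h1⟩
    exact ⟨-Real.log y, by simpa using Real.log_neg h0 h1, by simp [Real.exp_log h0]⟩

lemma inj1 : Set.InjOn (fun t : ℝ => Real.exp (-t)) (Set.Ioi 0) := by
  intro a _ b _ h
  simpa using Real.exp_injective h

lemma key (a : ℝ) (ha : -1 < a) :
    MeasureTheory.IntegrableOn (fun x : ℝ => x ^ a * Real.log x) (Set.Ioo 0 1) ∧
    ∫ x in Set.Ioo 0 1, x ^ a * Real.log x = -(1/(a+1)^2) := by
  have ha1 : 0 < a + 1 := by linarith
  have hd : ∀ t ∈ Set.Ioi (0:ℝ),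
      HasDerivWithinAt (fun t : ℝ => Real.exp (-t)) (-Real.exp (-t)) (Set.Ioi 0) t := by
    intro t _
    simpa [Function.comp_def] using ((Real.hasDerivAt_exp (-t)).comp t ((hasDerivAt_id t).neg)).hasDerivWithinAt
  have heq : ∀ t ∈ Set.Ioi (0:ℝ),
      |(-Real.exp (-t))| • ((Real.exp (-t)) ^ a * Real.log (Real.exp (-t)))
        = -(t ^ ((2:ℝ)-1) * Real.exp (-((a+1)*t))) := by
    intro t _
    have h1 : (Real.exp (-t)) ^ a = Real.exp (-t*a) := by
      rw [Real.rpow_def_of_pos (Real.exp_pos _), Real.log_exp]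
    rw [h1, abs_neg, abs_of_pos (Real.exp_pos _), Real.log_exp]
    rw [smul_eq_mul, show ((2:ℝ)-1) = (1:ℝ) by norm_num, Real.rpow_one,
      show -((a+1)*t) = -t + -t*a by ring, Real.exp_add]
    ring
  have hint : MeasureTheory.IntegrableOn
      (fun t : ℝ => t ^ ((2:ℝ)-1) * Real.exp (-((a+1)*t))) (Set.Ioi 0) := by
    have := integrableOn_rpow_mul_exp_neg_mul_rpow (p := 1) (s := (2:ℝ)-1) (b := a+1)
      (by norm_num) one_pos ha1
    refine this.congr_fun (fun t ht => ?_) measurableSet_Ioi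
    simp only [Real.rpow_one, neg_mul]
  constructor
  · rw [← img1, MeasureTheory.integrableOn_image_iff_integrableOn_abs_deriv_smul
      measurableSet_Ioi hd inj1]
    have h2 : MeasureTheory.IntegrableOn
        (fun t : ℝ => -(t ^ ((2:ℝ)-1) * Real.exp (-((a+1)*t)))) (Set.Ioi 0) := hint.neg
    exact h2.congr_fun (fun t ht => (heq t ht).symm) measurableSet_Ioi
  · rw [← img1, MeasureTheory.integral_image_eq_integral_abs_deriv_smul
      measurableSet_Ioi hd inj1]
    rw [MeasureTheory.setIntegral_congr_fun measurableSet_Ioi heq]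
    rw [MeasureTheory.integral_neg, Real.integral_rpow_mul_exp_neg_mul_Ioi (by norm_num) ha1]
    rw [Real.Gamma_two]
    rw [show ((1:ℝ)/(a+1)) ^ (2:ℝ) = ((1:ℝ)/(a+1))^(2:ℕ) by
      rw [← Real.rpow_natCast]; norm_num]
    rw [div_pow, one_pow, mul_one]

lemma img2 : (fun x : ℝ => x⁻¹) '' (Set.Ioo 0 1) = Set.Ioi 1 := by
  ext y
  constructor
  · rintro ⟨x, ⟨h0, h1⟩, rfl⟩
    exact (one_lt_inv_iff₀).2 ⟨h0, h1⟩
  · intro hy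
    have hy1 : (1:ℝ) < y := hy
    refine ⟨y⁻¹, ⟨inv_pos.2 (by linarith), inv_lt_one_of_one_lt₀ hy1⟩, by simp⟩

lemma inj2 : Set.InjOn (fun x : ℝ => x⁻¹) (Set.Ioo 0 1) := by
  intro a ha b hb h
  have := congrArg (·⁻¹) h
  simpa using this

lemma hd2 : ∀ x ∈ Set.Ioo (0:ℝ) 1,
    HasDerivWithinAt (fun x : ℝ => x⁻¹) (-(x^2)⁻¹) (Set.Ioo 0 1) x := by
  intro x hx
  exact (hasDerivAt_inv (ne_of_gt hx.1)).hasDerivWithinAt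

lemma subst_val (g : ℝ → ℝ) :
    ∫ x in Set.Ioi (1:ℝ), g x = ∫ x in Set.Ioo (0:ℝ) 1, |(-(x^2)⁻¹)| • g x⁻¹ := by
  rw [← img2, MeasureTheory.integral_image_eq_integral_abs_deriv_smul measurableSet_Ioo hd2 inj2]

lemma subst_int (g : ℝ → ℝ) :
    MeasureTheory.IntegrableOn g (Set.Ioi (1:ℝ)) ↔
    MeasureTheory.IntegrableOn (fun x => |(-(x^2)⁻¹)| • g x⁻¹) (Set.Ioo (0:ℝ) 1) := by
  rw [← img2, MeasureTheory.integrableOn_image_iff_integrableOn_abs_deriv_smul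
    measurableSet_Ioo hd2 inj2]

lemma transform (n x : ℝ) (hx0 : 0 < x) :
    |(-(x^2)⁻¹)| • (Real.log x⁻¹ / (x⁻¹ ^ n + 1)) = -(x ^ (n-2) * Real.log x) / (x ^ n + 1) := by
  have hxn : (0:ℝ) < x ^ n := Real.rpow_pos_of_pos hx0 n
  have h2 : x ^ (n-2) * x ^ (2:ℕ) = x ^ n := by
    rw [← Real.rpow_natCast x 2, ← Real.rpow_add hx0]
    norm_num
  have hden : x⁻¹ ^ n + 1 = (1 + x ^ n) / x ^ n := by
    rw [Real.inv_rpow hx0.le]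
    field_simp
  rw [abs_neg, abs_inv, abs_of_pos (pow_pos hx0 2), Real.log_inv, hden, smul_eq_mul,
    div_div_eq_mul_div, ← mul_div_assoc]
  rw [div_eq_div_iff (by positivity) (by positivity)]
  have h3 : x ^ (n-2) = x ^ n * ((x^2 : ℝ))⁻¹ := by
    rw [← h2]; field_simp
  rw [h3]; ring

lemma summable_aux {b d : ℝ} (hb : 0 < b) (hd : 0 < d) :
    Summable (fun k : ℕ => 1/(b*k+d)^2) := by
  set m := min b d with hm
  have hm0 : 0 < m := lt_min hb hd
  have base : Summable (fun k : ℕ => 1/((k:ℝ)+1)^2) := by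
    have := (_root_.summable_nat_add_iff (f := fun n : ℕ => 1/((n:ℝ))^2) 1).2
      (summable_one_div_nat_pow.mpr one_lt_two)
    refine this.congr fun k => ?_
    push_cast
    ring
  refine Summable.of_nonneg_of_le (fun k => by positivity) (fun k => ?_) (base.mul_left (1/m^2))
  have hk : (0:ℝ) ≤ k := Nat.cast_nonneg k
  have h2 : m ≤ b := min_le_left b d
  have h3 : m ≤ d := min_le_right b d
  have h1 : m * ((k:ℝ)+1) ≤ b*k+d := by nlinarith
  have h4 : 0 < m * ((k:ℝ)+1) := by positivity
  calc 1/(b*k+d)^2 ≤ 1/(m*((k:ℝ)+1))^2 := by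
        apply one_div_le_one_div_of_le (by positivity)
        exact pow_le_pow_left₀ h4.le h1 2
    _ = 1/m^2 * (1/((k:ℝ)+1)^2) := by
        rw [mul_pow, one_div, one_div, one_div, mul_inv]

lemma trig_scale (n z : ℝ) :
    (1/(4*n^2)) * trigamma z = ∑' k : ℕ, 1/(2*n*(k:ℝ) + 2*n*z)^2 := by
  rw [trigamma, ← tsum_mul_left]
  refine tsum_congr fun k => ?_
  rw [one_div, one_div, ← mul_inv, ← one_div]
  congr 1
  ring

end Aux

theorem stmt_16 (n : ℝ) (hn : 1 < n) :
    ∫ x in Set.Ioi (0:ℝ), Real.log x / (x ^ n + 1) =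
      (1 / (4 * n^2)) *
        (trigamma (1/2 - 1/(2*n)) + trigamma (1/2 + 1/(2*n)) -
         trigamma (1 - 1/(2*n)) - trigamma (1/(2*n))) := by
  have hn0 : (0:ℝ) < n := by linarith
  have hn1 : (0:ℝ) < n - 1 := by linarith
  have hne : n ≠ 0 := ne_of_gt hn0
  -- denominators are positive
  have hden : ∀ x : ℝ, 0 ≤ x → (0:ℝ) < x ^ n + 1 := fun x hx => by
    have := Real.rpow_nonneg hx n; linarith
  -- measurability of the integrand
  have hmeas : Measurable (fun x : ℝ => Real.log x / (x ^ n + 1)) := by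
    exact Real.measurable_log.div ((measurable_id.pow_const n).add_const 1) |>.mono le_rfl le_rfl
  -- integrand integrable on Ioo 0 1
  have hlog : MeasureTheory.IntegrableOn Real.log (Set.Ioo 0 1) := by
    have := (key 0 (by norm_num)).1
    refine this.congr_fun (fun x hx => ?_) measurableSet_Ioo
    simp only [Real.rpow_zero, one_mul]
  have hint1 : MeasureTheory.IntegrableOn
      (fun x : ℝ => Real.log x / (x ^ n + 1)) (Set.Ioo 0 1) := by
    refine MeasureTheory.Integrable.mono' hlog.abs
      (hmeas.aestronglyMeasurable.restrict) ?_
    filter_upwards [MeasureTheory.ae_restrict_mem measurableSet_Ioo] with x hx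
    have h1 : (1:ℝ) ≤ x ^ n + 1 := by
      have := Real.rpow_nonneg hx.1.le n; linarith
    rw [Real.norm_eq_abs, abs_div, abs_of_pos (by linarith : (0:ℝ) < x ^ n + 1)]
    calc |Real.log x| / (x ^ n + 1) ≤ |Real.log x| / 1 := by
          apply div_le_div_of_nonneg_left (abs_nonneg _) one_pos h1
      _ = |Real.log x| := div_one _
  -- the transformed integrand
  set g2 : ℝ → ℝ := fun x => -(x ^ (n-2) * Real.log x) / (x ^ n + 1) with hg2
  have hg2meas : Measurable g2 := by
    exact ((measurable_id.pow_const (n-2)).mul Real.measurable_log).neg.div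
      ((measurable_id.pow_const n).add_const 1)
  have hkey2 := key (n-2) (by linarith)
  have hint2 : MeasureTheory.IntegrableOn g2 (Set.Ioo 0 1) := by
    refine MeasureTheory.Integrable.mono' hkey2.1.abs
      (hg2meas.aestronglyMeasurable.restrict) ?_
    filter_upwards [MeasureTheory.ae_restrict_mem measurableSet_Ioo] with x hx
    have h1 : (1:ℝ) ≤ x ^ n + 1 := by
      have := Real.rpow_nonneg hx.1.le n; linarith
    rw [hg2]
    simp only []
    rw [Real.norm_eq_abs, abs_div, abs_of_pos (by linarith : (0:ℝ) < x ^ n + 1), abs_neg]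
    calc |x ^ (n-2) * Real.log x| / (x ^ n + 1) ≤ |x ^ (n-2) * Real.log x| / 1 := by
          apply div_le_div_of_nonneg_left (abs_nonneg _) one_pos h1
      _ = |x ^ (n-2) * Real.log x| := div_one _
  -- substitution on Ioi 1
  have heqn : Set.EqOn (fun x : ℝ => |(-(x^2)⁻¹)| • ((fun x : ℝ => Real.log x / (x ^ n + 1)) x⁻¹))
      g2 (Set.Ioo 0 1) := fun x hx => transform n x hx.1
  have hint3 : MeasureTheory.IntegrableOn
      (fun x : ℝ => Real.log x / (x ^ n + 1)) (Set.Ioi 1) := by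
    rw [subst_int]
    exact hint2.congr_fun (fun x hx => (heqn hx).symm) measurableSet_Ioo
  have hval3 : ∫ x in Set.Ioi (1:ℝ), Real.log x / (x ^ n + 1) = ∫ x in Set.Ioo (0:ℝ) 1, g2 x := by
    rw [subst_val]
    exact MeasureTheory.setIntegral_congr_fun measurableSet_Ioo heqn
  -- split the integral
  have hsplit : ∫ x in Set.Ioi (0:ℝ), Real.log x / (x ^ n + 1)
      = (∫ x in Set.Ioo (0:ℝ) 1, Real.log x / (x ^ n + 1)) + ∫ x in Set.Ioo (0:ℝ) 1, g2 x := by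
    rw [← hval3, ← Set.Ioc_union_Ioi_eq_Ioi (zero_le_one (α := ℝ))]
    rw [MeasureTheory.setIntegral_union (Set.Ioc_disjoint_Ioi le_rfl) measurableSet_Ioi
      (hint1.congr_set_ae MeasureTheory.Ioo_ae_eq_Ioc.symm) hint3]
    rw [MeasureTheory.integral_Ioc_eq_integral_Ioo]
  -- combine the two integrals over Ioo 0 1
  have hcomb : (∫ x in Set.Ioo (0:ℝ) 1, Real.log x / (x ^ n + 1)) + (∫ x in Set.Ioo (0:ℝ) 1, g2 x)
      = ∫ x in Set.Ioo (0:ℝ) 1, (1 - x ^ (n-2)) * Real.log x / (x ^ n + 1) := by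
    rw [← MeasureTheory.integral_add hint1 hint2]
    refine MeasureTheory.setIntegral_congr_fun measurableSet_Ioo (fun x hx => ?_)
    rw [hg2]
    simp only []
    rw [← add_div]
    congr 1
    ring
  -- the series expansion
  set F : ℕ → ℝ → ℝ := fun k x =>
    (-1:ℝ)^k * (x ^ (n*(k:ℝ)) * Real.log x - x ^ (n*(k:ℝ)+n-2) * Real.log x) with hF
  have hexp1 : ∀ k : ℕ, (-1:ℝ) < n*(k:ℝ) := fun k => by
    have : (0:ℝ) ≤ n*(k:ℝ) := mul_nonneg hn0.le (Nat.cast_nonneg k)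
    linarith
  have hexp2 : ∀ k : ℕ, (-1:ℝ) < n*(k:ℝ)+n-2 := fun k => by
    have : (0:ℝ) ≤ n*(k:ℝ) := mul_nonneg hn0.le (Nat.cast_nonneg k)
    linarith
  have hFhasSum : ∀ x ∈ Set.Ioo (0:ℝ) 1,
      HasSum (fun k => F k x) ((1 - x ^ (n-2)) * Real.log x / (x ^ n + 1)) := by
    intro x hx
    obtain ⟨hx0, hx1⟩ := hx
    have hxnpos : (0:ℝ) < x ^ n := Real.rpow_pos_of_pos hx0 n
    have hxn : x ^ n < 1 := Real.rpow_lt_one hx0.le hx1 hn0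
    have habs : |(-(x ^ n))| < 1 := by rw [abs_neg, abs_of_pos hxnpos]; exact hxn
    have hgeo := (hasSum_geometric_of_abs_lt_one habs).mul_right ((1 - x ^ (n-2)) * Real.log x)
    have h1 : ∀ k : ℕ, (-(x ^ n))^k * ((1 - x ^ (n-2)) * Real.log x) = F k x := by
      intro k
      have e1 : (-(x ^ n))^k = (-1:ℝ)^k * x ^ (n*(k:ℝ)) := by
        rw [neg_pow, ← Real.rpow_natCast (x ^ n) k, ← Real.rpow_mul hx0.le]
      have e2 : x ^ (n*(k:ℝ)+n-2) = x ^ (n*(k:ℝ)) * x ^ (n-2) := by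
        rw [← Real.rpow_add hx0]; ring_nf
      rw [hF]
      simp only []
      rw [e1, e2]
      ring
    rw [funext h1] at hgeo
    have h2 : (1 - -(x ^ n))⁻¹ * ((1 - x ^ (n-2)) * Real.log x)
        = (1 - x ^ (n-2)) * Real.log x / (x ^ n + 1) := by
      rw [sub_neg_eq_add, inv_mul_eq_div, add_comm]
    rwa [h2] at hgeo
  have hFint : ∀ k : ℕ, MeasureTheory.Integrable (F k) (volume.restrict (Set.Ioo (0:ℝ) 1)) :=
    fun k => ((key (n*(k:ℝ)) (hexp1 k)).1.sub (key (n*(k:ℝ)+n-2) (hexp2 k)).1).const_mul _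
  have hbound : ∀ k : ℕ, (∫ x in Set.Ioo (0:ℝ) 1, ‖F k x‖)
      ≤ 1/(n*(k:ℝ)+1)^2 + 1/(n*(k:ℝ)+(n-1))^2 := by
    intro k
    have i1 := key (n*(k:ℝ)) (hexp1 k)
    have i2 := key (n*(k:ℝ)+n-2) (hexp2 k)
    have hgint : MeasureTheory.IntegrableOn
        (fun x : ℝ => -(x ^ (n*(k:ℝ)) * Real.log x) + -(x ^ (n*(k:ℝ)+n-2) * Real.log x))
        (Set.Ioo 0 1) := i1.1.neg.add i2.1.neg
    have hgval : (∫ x in Set.Ioo (0:ℝ) 1,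
        (-(x ^ (n*(k:ℝ)) * Real.log x) + -(x ^ (n*(k:ℝ)+n-2) * Real.log x)))
        = 1/(n*(k:ℝ)+1)^2 + 1/(n*(k:ℝ)+(n-1))^2 := by
      have e : (∫ x in Set.Ioo (0:ℝ) 1,
          (-(x ^ (n*(k:ℝ)) * Real.log x) + -(x ^ (n*(k:ℝ)+n-2) * Real.log x)))
          = -∫ x in Set.Ioo (0:ℝ) 1,
            (x ^ (n*(k:ℝ)) * Real.log x + x ^ (n*(k:ℝ)+n-2) * Real.log x) := by
        rw [← MeasureTheory.integral_neg]
        congr 1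
        ext x
        ring
      rw [e, MeasureTheory.integral_add i1.1 i2.1, i1.2, i2.2]
      rw [show n*(k:ℝ)+n-2+1 = n*(k:ℝ)+(n-1) by ring]
      ring
    rw [← hgval]
    refine MeasureTheory.integral_mono_ae (hFint k).norm hgint ?_
    filter_upwards [MeasureTheory.ae_restrict_mem measurableSet_Ioo] with x hx
    obtain ⟨hx0, hx1⟩ := hx
    have hlx : Real.log x ≤ 0 := Real.log_nonpos hx0.le hx1.le
    have hu : x ^ (n*(k:ℝ)) * Real.log x ≤ 0 :=
      mul_nonpos_of_nonneg_of_nonpos (Real.rpow_nonneg hx0.le _) hlx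
    have hv : x ^ (n*(k:ℝ)+n-2) * Real.log x ≤ 0 :=
      mul_nonpos_of_nonneg_of_nonpos (Real.rpow_nonneg hx0.le _) hlx
    rw [hF]
    simp only []
    rw [Real.norm_eq_abs, abs_mul, abs_pow, abs_neg, abs_one, one_pow, one_mul]
    calc |x ^ (n*(k:ℝ)) * Real.log x - x ^ (n*(k:ℝ)+n-2) * Real.log x|
        ≤ |x ^ (n*(k:ℝ)) * Real.log x| + |x ^ (n*(k:ℝ)+n-2) * Real.log x| := abs_sub _ _
      _ = -(x ^ (n*(k:ℝ)) * Real.log x) + -(x ^ (n*(k:ℝ)+n-2) * Real.log x) := by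
          rw [abs_of_nonpos hu, abs_of_nonpos hv]
  have hFsum : Summable (fun k : ℕ => ∫ x in Set.Ioo (0:ℝ) 1, ‖F k x‖) := by
    refine Summable.of_nonneg_of_le
      (fun k => MeasureTheory.integral_nonneg (fun x => norm_nonneg _)) hbound ?_
    exact (summable_aux hn0 one_pos).add (summable_aux hn0 hn1)
  have hseries : (∫ x in Set.Ioo (0:ℝ) 1, (1 - x ^ (n-2)) * Real.log x / (x ^ n + 1))
      = ∑' k : ℕ, ∫ x in Set.Ioo (0:ℝ) 1, F k x := by
    rw [MeasureTheory.integral_tsum_of_summable_integral_norm hFint hFsum]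
    refine MeasureTheory.setIntegral_congr_fun measurableSet_Ioo (fun x hx => ?_)
    exact ((hFhasSum x hx).tsum_eq).symm
  have hterm : ∀ k : ℕ, (∫ x in Set.Ioo (0:ℝ) 1, F k x)
      = (-1:ℝ)^k * (1/(n*(k:ℝ)+(n-1))^2 - 1/(n*(k:ℝ)+1)^2) := by
    intro k
    have i1 := key (n*(k:ℝ)) (hexp1 k)
    have i2 := key (n*(k:ℝ)+n-2) (hexp2 k)
    rw [hF]
    simp only []
    rw [MeasureTheory.integral_const_mul, MeasureTheory.integral_sub i1.1 i2.1, i1.2, i2.2]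
    rw [show n*(k:ℝ)+n-2+1 = n*(k:ℝ)+(n-1) by ring]
    ring
  -- the series identity
  set f : ℕ → ℝ := fun k => (-1:ℝ)^k * (1/(n*(k:ℝ)+(n-1))^2 - 1/(n*(k:ℝ)+1)^2) with hfdef
  have h2n : (0:ℝ) < 2*n := by linarith
  have hfe : ∀ j : ℕ, f (2*j) = 1/(2*n*(j:ℝ)+(n-1))^2 - 1/(2*n*(j:ℝ)+1)^2 := by
    intro j
    rw [hfdef]
    simp only []
    rw [pow_mul, neg_one_sq, one_pow, one_mul]
    push_cast
    ring_nf
  have hfo : ∀ j : ℕ, f (2*j+1) = 1/(2*n*(j:ℝ)+(n+1))^2 - 1/(2*n*(j:ℝ)+(2*n-1))^2 := by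
    intro j
    rw [hfdef]
    simp only []
    rw [pow_succ, pow_mul, neg_one_sq, one_pow, one_mul]
    push_cast
    ring_nf
  have hS1 := summable_aux h2n hn1
  have hS2 := summable_aux h2n (by linarith : (0:ℝ) < n+1)
  have hS3 := summable_aux h2n (by linarith : (0:ℝ) < 2*n-1)
  have hS4 := summable_aux h2n one_pos
  have hSe : Summable (fun j : ℕ => f (2*j)) := by
    refine (hS1.sub hS4).congr fun j => (hfe j).symm
  have hSo : Summable (fun j : ℕ => f (2*j+1)) := by
    refine (hS2.sub hS3).congr fun j => (hfo j).symm
  have heo := tsum_even_add_odd hSe hSo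
  have hEv : ∑' j : ℕ, f (2*j)
      = (∑' j : ℕ, 1/(2*n*(j:ℝ)+(n-1))^2) - ∑' j : ℕ, 1/(2*n*(j:ℝ)+1)^2 := by
    rw [tsum_congr hfe]
    exact Summable.tsum_sub hS1 hS4
  have hOd : ∑' j : ℕ, f (2*j+1)
      = (∑' j : ℕ, 1/(2*n*(j:ℝ)+(n+1))^2) - ∑' j : ℕ, 1/(2*n*(j:ℝ)+(2*n-1))^2 := by
    rw [tsum_congr hfo]
    exact Summable.tsum_sub hS2 hS3
  -- rewrite the RHS trigamma terms
  have ht1 : (1/(4*n^2)) * trigamma (1/2 - 1/(2*n)) = ∑' j : ℕ, 1/(2*n*(j:ℝ)+(n-1))^2 := by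
    rw [trig_scale]
    refine tsum_congr fun j => ?_
    rw [show 2*n*(1/2 - 1/(2*n)) = n-1 by field_simp]
  have ht2 : (1/(4*n^2)) * trigamma (1/2 + 1/(2*n)) = ∑' j : ℕ, 1/(2*n*(j:ℝ)+(n+1))^2 := by
    rw [trig_scale]
    refine tsum_congr fun j => ?_
    rw [show 2*n*(1/2 + 1/(2*n)) = n+1 by field_simp]
  have ht3 : (1/(4*n^2)) * trigamma (1 - 1/(2*n)) = ∑' j : ℕ, 1/(2*n*(j:ℝ)+(2*n-1))^2 := by
    rw [trig_scale]
    refine tsum_congr fun j => ?_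
    rw [show 2*n*(1 - 1/(2*n)) = 2*n-1 by field_simp]
  have ht4 : (1/(4*n^2)) * trigamma (1/(2*n)) = ∑' j : ℕ, 1/(2*n*(j:ℝ)+1)^2 := by
    rw [trig_scale]
    refine tsum_congr fun j => ?_
    rw [show 2*n*(1/(2*n)) = 1 by field_simp]
  -- put everything together
  rw [hsplit, hcomb, hseries]
  have hterm' : ∑' k : ℕ, (∫ x in Set.Ioo (0:ℝ) 1, F k x) = ∑' k : ℕ, f k :=
    tsum_congr fun k => hterm k
  rw [hterm']
  rw [← heo, hEv, hOd]
  have hRHS : (1 / (4 * n^2)) *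
      (trigamma (1/2 - 1/(2*n)) + trigamma (1/2 + 1/(2*n)) -
       trigamma (1 - 1/(2*n)) - trigamma (1/(2*n)))
      = (1/(4*n^2)) * trigamma (1/2 - 1/(2*n)) + (1/(4*n^2)) * trigamma (1/2 + 1/(2*n))
        - (1/(4*n^2)) * trigamma (1 - 1/(2*n)) - (1/(4*n^2)) * trigamma (1/(2*n)) := by ring
  rw [hRHS, ht1, ht2, ht3, ht4]
  ring
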